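/- Let Γ be a k-regular graph on v vertices whose adjacency matrix has smallest eigenvalue s. Then for any nonempty vertex subset Y, the average degree of the induced subgraph on Y is at least |Y|·(k−s)/v + s. -/

import Mathlib

open Finset Matrix

lemma quadform_lb {n : Type*} [Fintype n] [DecidableEq n] (A : Matrix n n ℝ)
    (hA : A.IsHermitian) (s : ℝ) (hs : ∀ i, s ≤ hA.eigenvalues i) (x : n → ℝ) :
    s * (x ⬝ᵥ x) ≤ x ⬝ᵥ (A *ᵥ x) := by
  have hU := hA.spectral_theorem
  set U : Matrix n n ℝ := (hA.eigenvectorUnitary : Matrix n n ℝ) with hUdef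
  have h1 : U * star U = 1 := Matrix.mem_unitaryGroup_iff.mp hA.eigenvectorUnitary.2
  have hdd : Matrix.diagonal (RCLike.ofReal ∘ hA.eigenvalues) - s • (1 : Matrix n n ℝ)
      = Matrix.diagonal (fun i => hA.eigenvalues i - s) := by
    ext i j
    by_cases h : i = j <;> simp [h, Matrix.one_apply, Matrix.diagonal_apply]
  have hdiag : A - s • 1 = U * Matrix.diagonal (fun i => hA.eigenvalues i - s) * star U := by
    have h2 : (s • (1 : Matrix n n ℝ)) = U * (s • (1 : Matrix n n ℝ)) * star U := by
      rw [Matrix.mul_smul, Matrix.mul_one, Matrix.smul_mul, h1]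
    rw [← hdd, Matrix.mul_sub, Matrix.sub_mul, ← h2]; exact congrArg (· - s • 1) hU
  have hpsd : (A - s • 1).PosSemidef := by
    rw [hdiag]
    exact (Matrix.PosSemidef.diagonal (fun i => sub_nonneg.mpr (hs i))).mul_mul_conjTranspose_same U
  have h3 := hpsd.dotProduct_mulVec_nonneg x
  have hstar : (star x : n → ℝ) = x := by ext i; simp
  rw [hstar, Matrix.sub_mulVec, dotProduct_sub, Matrix.smul_mulVec,
    Matrix.one_mulVec, dotProduct_smul, smul_eq_mul] at h3
  linarith

theorem stmt2 {V : Type*} [Fintype V] [DecidableEq V] (Γ : SimpleGraph V)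
    [DecidableRel Γ.Adj] (k : ℕ) (hreg : Γ.IsRegularOfDegree k)
    (hA : (Γ.adjMatrix ℝ).IsHermitian) (s : ℝ)
    (hs_lb : ∀ i, s ≤ hA.eigenvalues i) (hs_mem : ∃ i, hA.eigenvalues i = s)
    (Y : Finset V) (hY : Y.Nonempty) :
    (Y.card : ℝ) * ((k : ℝ) - s) / (Fintype.card V) + s ≤
      (∑ x ∈ Y, ∑ y ∈ Y, if Γ.Adj x y then (1 : ℝ) else 0) / Y.card := by
  set A := Γ.adjMatrix ℝ with hAdef
  set χ : V → ℝ := fun i => if i ∈ Y then 1 else 0 with hχ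
  set o : V → ℝ := fun _ => 1 with ho
  have hχχ : χ ⬝ᵥ χ = Y.card := by
    simp [dotProduct, hχ, ite_and, apply_ite]
  have hoχ : o ⬝ᵥ χ = Y.card := by simp [dotProduct, hχ, ho]
  have hχo : χ ⬝ᵥ o = Y.card := by simp [dotProduct, hχ, ho]
  have hoo : o ⬝ᵥ o = (Fintype.card V : ℝ) := by simp [dotProduct, ho]
  have hAo : A *ᵥ o = fun _ => (k : ℝ) := by
    funext v
    simp [hAdef, ho, hreg v]
  have hχAo : χ ⬝ᵥ (A *ᵥ o) = k * Y.card := by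
    rw [hAo]
    simp [dotProduct, hχ, apply_ite]
    ring
  have hoAχ : o ⬝ᵥ (A *ᵥ χ) = k * Y.card := by
    rw [Matrix.dotProduct_mulVec]
    have : o ᵥ* A = fun _ => (k : ℝ) := by
      funext v
      simp [hAdef, ho, hreg v]
    rw [this]
    simp [dotProduct, hχ, apply_ite]
    ring
  have hoAo : o ⬝ᵥ (A *ᵥ o) = k * Fintype.card V := by
    rw [hAo]; simp [dotProduct, ho]; ring
  have hQ : χ ⬝ᵥ (A *ᵥ χ) = ∑ x ∈ Y, ∑ y ∈ Y, if Γ.Adj x y then (1 : ℝ) else 0 := by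
    rw [hAdef, SimpleGraph.dotProduct_mulVec_adjMatrix]
    rw [← Finset.sum_subset Y.subset_univ (fun x _ hx => by simp [hχ, hx])]
    refine Finset.sum_congr rfl fun x hx => ?_
    rw [← Finset.sum_subset Y.subset_univ (fun y _ hy => by simp [hχ, hy])]
    refine Finset.sum_congr rfl fun y hy => ?_
    simp [hχ, hx, hy]
  -- numbers
  have hm0 : (0 : ℝ) < Y.card := by exact_mod_cast Finset.card_pos.mpr hY
  have hn0 : (0 : ℝ) < Fintype.card V := by
    have : Nonempty V := ⟨hY.choose⟩
    exact_mod_cast Fintype.card_pos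
  set m : ℝ := (Y.card : ℝ)
  set nn : ℝ := (Fintype.card V : ℝ)
  set c : ℝ := m / nn with hc
  have hcn : c * nn = m := div_mul_cancel₀ m (ne_of_gt hn0)
  set z : V → ℝ := χ - c • o with hz
  have hq := quadform_lb A hA s hs_lb z
  have hzz : z ⬝ᵥ z = m - 2 * c * m + c * c * nn := by
    rw [hz, sub_dotProduct, dotProduct_sub, dotProduct_sub,
      smul_dotProduct, smul_dotProduct, dotProduct_smul,
      dotProduct_smul, hχχ, hχo, hoχ, hoo]
    simp only [smul_eq_mul]
    ring
  have hzAz : z ⬝ᵥ (A *ᵥ z) = χ ⬝ᵥ (A *ᵥ χ) - 2 * c * (k * m) + c * c * (k * nn) := by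
    rw [hz, Matrix.mulVec_sub, Matrix.mulVec_smul, sub_dotProduct,
      dotProduct_sub, dotProduct_sub, smul_dotProduct,
      smul_dotProduct, dotProduct_smul, dotProduct_smul,
      hχAo, hoAχ, hoAo]
    simp only [smul_eq_mul]
    ring
  rw [hzz, hzAz] at hq
  rw [← hQ, le_div_iff₀ hm0]
  have hccn : c * c * nn = c * m := by rw [mul_assoc, hcn]
  have hccn2 : c * c * ((k : ℝ) * nn) = c * ((k : ℝ) * m) := by
    rw [show c * c * ((k : ℝ) * nn) = (k : ℝ) * (c * (c * nn)) by ring, hcn]; ring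
  have hgoal : m * ((k : ℝ) - s) / nn + s = c * ((k : ℝ) - s) + s := by
    rw [hc]; ring
  rw [hgoal]
  have h5 : s * (c * c * nn) = s * (c * m) := by rw [hccn]
  linarith [hq, hccn2, h5]
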